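/- Let H be an infinite-dimensional separable complex Hilbert space and let a ∈ [0,1]. Then there exists a strongly continuous map p : [0,1] → B(H) such that each p(t) is a projection, p(a) = 0, and range p(t) is infinite-dimensional for every t ≠ a. -/

import Mathlib

set_option maxHeartbeats 1000000

noncomputable section
namespace ProjField

local notation "K" => lp (fun _ : ℕ => ℂ) 2
local notation "⟪" x ", " y "⟫" => @inner ℂ _ _ x y

lemma htwo : (0:ℝ) < (2 : ENNReal).toReal := by simp

def wseq (r : ℝ) : ∀ _ : ℕ, ℂ := fun n => ((Real.sqrt (1 - r ^ 2) * r ^ n : ℝ) : ℂ)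

lemma norm_wseq (r : ℝ) (hr0 : 0 ≤ r) (n : ℕ) :
    ‖wseq r n‖ = Real.sqrt (1 - r ^ 2) * r ^ n := by
  rw [wseq, Complex.norm_real, Real.norm_eq_abs, abs_of_nonneg (by positivity)]

lemma summable_sq (r : ℝ) (hr0 : 0 ≤ r) (hr1 : r < 1) :
    Summable (fun n : ℕ => (1 - r ^ 2) * (r ^ 2) ^ n) :=
  (summable_geometric_of_lt_one (by positivity) (by nlinarith)).mul_left _

lemma norm_wseq_sq (r : ℝ) (hr0 : 0 ≤ r) (hr1 : r ≤ 1) (n : ℕ) :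
    ‖wseq r n‖ ^ (2 : ℝ) = (1 - r ^ 2) * (r ^ 2) ^ n := by
  have hsq : (0:ℝ) ≤ 1 - r ^ 2 := by nlinarith [pow_le_one₀ hr0 hr1 (n := 2)]
  rw [norm_wseq r hr0, show (2:ℝ) = ((2:ℕ):ℝ) by norm_num, Real.rpow_natCast,
    mul_pow, Real.sq_sqrt hsq]
  ring

lemma wseq_eq_zero (r : ℝ) (h : 1 ≤ |r|) : wseq r = 0 := by
  funext n
  have h1 : (1:ℝ) - r ^ 2 ≤ 0 := by nlinarith [sq_abs r, abs_nonneg r]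
  rw [wseq]
  rw [Real.sqrt_eq_zero'.mpr h1]
  push_cast
  simp

lemma wseq_memℓp (r : ℝ) : Memℓp (wseq r) 2 := by
  by_cases h : |r| < 1
  · apply memℓp_gen
    have h2 : (2 : ENNReal).toReal = (2 : ℝ) := by simp
    rw [h2]
    have hr2 : r ^ 2 < 1 := by nlinarith [sq_abs r, abs_nonneg r]
    have hterm : ∀ n : ℕ, ‖wseq r n‖ ^ (2:ℝ) = (1 - r ^ 2) * (r ^ 2) ^ n := by
      intro n
      have : ‖wseq r n‖ = Real.sqrt (1 - r ^ 2) * |r| ^ n := by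
        rw [wseq, Complex.norm_real, Real.norm_eq_abs, abs_mul,
          abs_of_nonneg (Real.sqrt_nonneg _), abs_pow]
      rw [this, show (2:ℝ) = ((2:ℕ):ℝ) by norm_num, Real.rpow_natCast, mul_pow,
        Real.sq_sqrt (by nlinarith), ← pow_mul, mul_comm n 2, pow_mul, sq_abs]
    exact ((summable_geometric_of_lt_one (by positivity) hr2).mul_left _).congr
      fun n => (hterm n).symm
  · rw [wseq_eq_zero r (not_lt.mp h)]
    exact zero_memℓp

def wvec (r : ℝ) : K := ⟨wseq r, wseq_memℓp r⟩

lemma wvec_apply (r : ℝ) (n : ℕ) :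
    (wvec r : ∀ _ : ℕ, ℂ) n = ((Real.sqrt (1 - r ^ 2) * r ^ n : ℝ) : ℂ) := rfl

lemma tsum_norm_wvec_sq (r : ℝ) (hr0 : 0 ≤ r) (hr1 : r < 1) :
    ∑' n : ℕ, ‖wseq r n‖ ^ (2 : ℝ) = 1 := by
  rw [tsum_congr (fun n => norm_wseq_sq r hr0 hr1.le n), tsum_mul_left,
    tsum_geometric_of_lt_one (by positivity) (by nlinarith)]
  have : 1 - r ^ 2 ≠ 0 := by nlinarith
  field_simp

lemma norm_wvec (r : ℝ) (hr0 : 0 ≤ r) (hr1 : r < 1) : ‖wvec r‖ = 1 := by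
  have h := lp.norm_rpow_eq_tsum (p := 2) htwo (wvec r)
  have h2 : (2 : ENNReal).toReal = (2 : ℝ) := by simp
  rw [h2] at h
  have h1 : ‖wvec r‖ ^ (2:ℝ) = 1 := by rw [h]; exact tsum_norm_wvec_sq r hr0 hr1
  have h1' : ‖wvec r‖ ^ (2:ℕ) = 1 := by
    rw [← Real.rpow_natCast, Nat.cast_ofNat]; exact h1
  have hnn : (0:ℝ) ≤ ‖wvec r‖ := norm_nonneg _
  have h3 : (‖wvec r‖ - 1) * (‖wvec r‖ + 1) = 0 := by
    have hx : (‖wvec r‖ - 1) * (‖wvec r‖ + 1) = ‖wvec r‖ ^ (2:ℕ) - 1 := by ring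
    rw [hx, h1', sub_self]
  rcases mul_eq_zero.mp h3 with h4 | h4
  · linarith
  · linarith

lemma wvec_one : wvec 1 = 0 := by
  apply lp.ext
  rw [lp.coeFn_zero]
  show wseq 1 = 0
  exact wseq_eq_zero 1 (by norm_num)

lemma norm_wvec_le (r : ℝ) (hr0 : 0 ≤ r) (hr1 : r ≤ 1) : ‖wvec r‖ ≤ 1 := by
  rcases lt_or_eq_of_le hr1 with h | h
  · exact (norm_wvec r hr0 h).le
  · subst h; rw [wvec_one]; simp

lemma inner_wvec (r r' : ℝ) (hr0 : 0 ≤ r) (hr1 : r < 1) (hr0' : 0 ≤ r') (hr1' : r' < 1) :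
    ⟪wvec r, wvec r'⟫ =
      ((Real.sqrt (1 - r ^ 2) * Real.sqrt (1 - r' ^ 2) / (1 - r * r') : ℝ) : ℂ) := by
  rw [lp.inner_eq_tsum]
  have hterm : ∀ n : ℕ, ⟪(wvec r : ∀ _ : ℕ, ℂ) n, (wvec r' : ∀ _ : ℕ, ℂ) n⟫
      = ((Real.sqrt (1 - r ^ 2) * Real.sqrt (1 - r' ^ 2) : ℝ) : ℂ) * ((r * r' : ℝ) : ℂ) ^ n := by
    intro n
    rw [wvec_apply, wvec_apply, RCLike.inner_apply, Complex.conj_ofReal]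
    push_cast
    ring
  rw [tsum_congr hterm, tsum_mul_left, tsum_geometric_of_norm_lt_one (by
    rw [Complex.norm_real, Real.norm_eq_abs, abs_of_nonneg (by positivity)]
    nlinarith)]
  have hne : (1 : ℝ) - r * r' ≠ 0 := by nlinarith
  push_cast
  field_simp

lemma norm_wvec_sub_sq (r r' : ℝ) (hr0 : 0 ≤ r) (hr1 : r < 1) (hr0' : 0 ≤ r') (hr1' : r' < 1) :
    ‖wvec r - wvec r'‖ ^ (2:ℕ) =
      2 - 2 * (Real.sqrt (1 - r ^ 2) * Real.sqrt (1 - r' ^ 2) / (1 - r * r')) := by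
  rw [@norm_sub_sq ℂ _ _ _ _ (wvec r) (wvec r'),
    norm_wvec r hr0 hr1, norm_wvec r' hr0' hr1', inner_wvec r r' hr0 hr1 hr0' hr1']
  simp only [RCLike.re_to_complex, Complex.ofReal_re]
  ring

lemma norm_inner_wvec_single (r : ℝ) (hr0 : 0 ≤ r) (hr1 : r ≤ 1) (n : ℕ) (c : ℂ) :
    ‖⟪wvec r, lp.single 2 n c⟫‖ ≤ Real.sqrt (1 - r ^ 2) * ‖c‖ := by
  rw [lp.inner_single_right, RCLike.inner_apply', norm_mul, RCLike.norm_conj]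
  have h1 : ‖(wvec r : ∀ _ : ℕ, ℂ) n‖ ≤ Real.sqrt (1 - r ^ 2) := by
    rw [wvec_apply, Complex.norm_real, Real.norm_eq_abs, abs_of_nonneg (by positivity)]
    calc Real.sqrt (1 - r ^ 2) * r ^ n ≤ Real.sqrt (1 - r ^ 2) * 1 := by
          apply mul_le_mul_of_nonneg_left _ (Real.sqrt_nonneg _)
          exact pow_le_one₀ hr0 hr1
      _ = Real.sqrt (1 - r ^ 2) := mul_one _
  exact mul_le_mul_of_nonneg_right h1 (norm_nonneg _)

/-! ## The block operator -/

local notation "Q" => lp (fun _ : ℕ => (lp (fun _ : ℕ => ℂ) 2 : Type)) 2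

def qop (r : ℝ) : K →L[ℂ] K := (innerSL ℂ (wvec r)).smulRight (wvec r)

lemma qop_apply (r : ℝ) (y : K) : qop r y = ⟪wvec r, y⟫ • wvec r := rfl

lemma norm_qop_le_inner (r : ℝ) (hr0 : 0 ≤ r) (hr1 : r ≤ 1) (y : K) :
    ‖qop r y‖ ≤ ‖⟪wvec r, y⟫‖ := by
  rw [qop_apply, norm_smul]
  calc ‖⟪wvec r, y⟫‖ * ‖wvec r‖ ≤ ‖⟪wvec r, y⟫‖ * 1 :=
        mul_le_mul_of_nonneg_left (norm_wvec_le r hr0 hr1) (norm_nonneg _)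
    _ = _ := mul_one _

lemma norm_qop_le (r : ℝ) (hr0 : 0 ≤ r) (hr1 : r ≤ 1) (y : K) : ‖qop r y‖ ≤ ‖y‖ := by
  refine (norm_qop_le_inner r hr0 hr1 y).trans ?_
  calc ‖⟪wvec r, y⟫‖ ≤ ‖wvec r‖ * ‖y‖ := norm_inner_le_norm _ _
    _ ≤ 1 * ‖y‖ := mul_le_mul_of_nonneg_right (norm_wvec_le r hr0 hr1) (norm_nonneg _)
    _ = ‖y‖ := one_mul _

lemma norm_qop_le' (r : ℝ) (y : K) : ‖qop r y‖ ≤ ‖wvec r‖ ^ 2 * ‖y‖ := by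
  rw [qop_apply, norm_smul]
  calc ‖⟪wvec r, y⟫‖ * ‖wvec r‖ ≤ (‖wvec r‖ * ‖y‖) * ‖wvec r‖ :=
        mul_le_mul_of_nonneg_right (norm_inner_le_norm _ _) (norm_nonneg _)
    _ = ‖wvec r‖ ^ 2 * ‖y‖ := by ring

lemma wvec_alt (r : ℝ) (hr0 : 0 ≤ r) (hr1 : r ≤ 1) : ‖wvec r‖ = 1 ∨ wvec r = 0 := by
  rcases lt_or_eq_of_le hr1 with h | h
  · exact Or.inl (norm_wvec r hr0 h)
  · subst h; exact Or.inr wvec_one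

lemma qop_qop (r : ℝ) (hr0 : 0 ≤ r) (hr1 : r ≤ 1) (y : K) :
    qop r (qop r y) = qop r y := by
  rcases wvec_alt r hr0 hr1 with h | h
  · rw [qop_apply, qop_apply, inner_smul_right, inner_self_eq_norm_sq_to_K, h]
    push_cast
    rw [one_pow, mul_one]
  · simp [qop_apply, h]

lemma qop_symm (r : ℝ) (u v : K) : ⟪qop r u, v⟫ = ⟪u, qop r v⟫ := by
  rw [qop_apply, qop_apply, inner_smul_left, inner_smul_right, inner_conj_symm]
  ring

lemma qop_wvec (r : ℝ) (hr0 : 0 ≤ r) (hr1 : r < 1) : qop r (wvec r) = wvec r := by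
  rw [qop_apply, inner_self_eq_norm_sq_to_K, norm_wvec r hr0 hr1]
  norm_num

lemma norm_qop_diff (r r' : ℝ) (hr0 : 0 ≤ r) (hr1 : r ≤ 1) (hr0' : 0 ≤ r') (hr1' : r' ≤ 1)
    (y : K) : ‖qop r y - qop r' y‖ ≤ 2 * ‖wvec r - wvec r'‖ * ‖y‖ := by
  have hdecomp : qop r y - qop r' y
      = ⟪wvec r - wvec r', y⟫ • wvec r + ⟪wvec r', y⟫ • (wvec r - wvec r') := by
    rw [qop_apply, qop_apply, inner_sub_left]
    module
  rw [hdecomp]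
  calc ‖⟪wvec r - wvec r', y⟫ • wvec r + ⟪wvec r', y⟫ • (wvec r - wvec r')‖
      ≤ ‖⟪wvec r - wvec r', y⟫ • wvec r‖ + ‖⟪wvec r', y⟫ • (wvec r - wvec r')‖ := norm_add_le _ _
    _ = ‖⟪wvec r - wvec r', y⟫‖ * ‖wvec r‖ + ‖⟪wvec r', y⟫‖ * ‖wvec r - wvec r'‖ := by
        rw [norm_smul, norm_smul]
    _ ≤ (‖wvec r - wvec r'‖ * ‖y‖) * 1 + (‖wvec r'‖ * ‖y‖) * ‖wvec r - wvec r'‖ := by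
        apply add_le_add
        · exact mul_le_mul (norm_inner_le_norm _ _) (norm_wvec_le r hr0 hr1)
            (norm_nonneg _) (by positivity)
        · exact mul_le_mul_of_nonneg_right (norm_inner_le_norm _ _) (norm_nonneg _)
    _ ≤ (‖wvec r - wvec r'‖ * ‖y‖) * 1 + (1 * ‖y‖) * ‖wvec r - wvec r'‖ := by
        apply add_le_add_right
        apply mul_le_mul_of_nonneg_right _ (norm_nonneg _)
        exact mul_le_mul_of_nonneg_right (norm_wvec_le r' hr0' hr1') (norm_nonneg _)
    _ = 2 * ‖wvec r - wvec r'‖ * ‖y‖ := by ring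

lemma memℓp_comp (r : ℝ) (x : Q) :
    Memℓp (fun k => qop r ((x : ∀ _ : ℕ, K) k)) 2 := by
  apply memℓp_gen
  have hsum : Summable fun k => ((‖wvec r‖ ^ 2) ^ (2 : ENNReal).toReal *
      ‖(x : ∀ _ : ℕ, K) k‖ ^ (2 : ENNReal).toReal) :=
    ((lp.memℓp x).summable htwo).mul_left _
  apply Summable.of_nonneg_of_le (fun k => by positivity) (fun k => ?_) hsum
  rw [← Real.mul_rpow (by positivity) (norm_nonneg _)]
  exact Real.rpow_le_rpow (norm_nonneg _) (norm_qop_le' r _) (le_of_lt htwo)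

def PL (r : ℝ) : Q →ₗ[ℂ] Q where
  toFun x := ⟨fun k => qop r ((x : ∀ _ : ℕ, K) k), memℓp_comp r x⟩
  map_add' x y := by
    apply lp.ext
    funext k
    show qop r ((x + y : Q) k) = (qop r (x k)) + (qop r (y k))
    rw [lp.coeFn_add, Pi.add_apply, map_add]
  map_smul' c x := by
    apply lp.ext
    funext k
    show qop r ((c • x : Q) k) = c • (qop r (x k))
    rw [lp.coeFn_smul, Pi.smul_apply, map_smul]

lemma PL_apply (r : ℝ) (x : Q) (k : ℕ) :
    (PL r x : ∀ _ : ℕ, K) k = qop r ((x : ∀ _ : ℕ, K) k) := rfl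

lemma lp_norm_le_of_le {f g : Q} {C : ℝ} (hC : 0 ≤ C)
    (h : ∀ k, ‖(f : ∀ _ : ℕ, K) k‖ ≤ C * ‖(g : ∀ _ : ℕ, K) k‖) : ‖f‖ ≤ C * ‖g‖ := by
  have e2 : ((2 : ENNReal).toReal) = (2:ℝ) := by simp
  have hf := lp.norm_rpow_eq_tsum (p := 2) htwo f
  have hg := lp.norm_rpow_eq_tsum (p := 2) htwo g
  have hsumf := (lp.memℓp f).summable htwo
  have hsumg := (lp.memℓp g).summable htwo
  have key : ‖f‖ ^ (2 : ENNReal).toReal ≤ (C * ‖g‖) ^ (2 : ENNReal).toReal := by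
    rw [hf, Real.mul_rpow hC (norm_nonneg _), hg, ← tsum_mul_left]
    apply Summable.tsum_le_tsum _ hsumf (hsumg.mul_left _)
    intro k
    calc ‖(f : ∀ _ : ℕ, K) k‖ ^ (2 : ENNReal).toReal
        ≤ (C * ‖(g : ∀ _ : ℕ, K) k‖) ^ (2 : ENNReal).toReal :=
          Real.rpow_le_rpow (norm_nonneg _) (h k) (le_of_lt htwo)
      _ = C ^ (2 : ENNReal).toReal * ‖(g : ∀ _ : ℕ, K) k‖ ^ (2 : ENNReal).toReal :=
          Real.mul_rpow hC (norm_nonneg _)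
  rw [e2] at key
  have h1 : ‖f‖ ^ (2:ℕ) ≤ (C * ‖g‖) ^ (2:ℕ) := by
    rw [← Real.rpow_natCast ‖f‖ 2, ← Real.rpow_natCast (C * ‖g‖) 2, Nat.cast_ofNat]
    exact key
  exact (pow_le_pow_iff_left₀ (norm_nonneg _) (by positivity) (by norm_num)).mp h1

def Pop (r : ℝ) : Q →L[ℂ] Q :=
  LinearMap.mkContinuous (PL r) (‖wvec r‖ ^ 2) (fun x => by
    apply lp_norm_le_of_le (C := ‖wvec r‖ ^ 2) (by positivity)
    intro k
    rw [PL_apply]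
    exact norm_qop_le' r _)

lemma Pop_apply (r : ℝ) (x : Q) (k : ℕ) :
    (Pop r x : ∀ _ : ℕ, K) k = qop r ((x : ∀ _ : ℕ, K) k) := rfl

lemma norm_Pop_le (r : ℝ) (hr0 : 0 ≤ r) (hr1 : r ≤ 1) (x : Q) :
    ‖Pop r x‖ ≤ ‖x‖ := by
  have := lp_norm_le_of_le (f := Pop r x) (g := x) (C := 1) zero_le_one
    (fun k => by rw [Pop_apply, one_mul]; exact norm_qop_le r hr0 hr1 _)
  simpa using this

lemma Pop_Pop (r : ℝ) (hr0 : 0 ≤ r) (hr1 : r ≤ 1) (x : Q) :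
    Pop r (Pop r x) = Pop r x := by
  apply lp.ext
  funext k
  show qop r ((Pop r x : ∀ _ : ℕ, K) k) = _
  rw [Pop_apply]
  exact qop_qop r hr0 hr1 _

lemma Pop_symm (r : ℝ) (x y : Q) : ⟪Pop r x, y⟫ = ⟪x, Pop r y⟫ := by
  rw [lp.inner_eq_tsum, lp.inner_eq_tsum]
  apply tsum_congr
  intro k
  rw [Pop_apply, Pop_apply]
  exact qop_symm r _ _

lemma Pop_single (r : ℝ) (k : ℕ) (y : K) :
    Pop r (lp.single 2 k y) = lp.single 2 k (qop r y) := by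
  apply lp.ext
  funext l
  rw [Pop_apply]
  by_cases h : l = k
  · subst h
    rw [lp.single_apply_self, lp.single_apply_self]
  · rw [lp.single_apply_ne 2 k _ h, lp.single_apply_ne 2 k _ h, map_zero]

lemma qop_one (y : K) : qop 1 y = 0 := by
  rw [qop_apply, wvec_one, inner_zero_left, zero_smul]

lemma Pop_one (x : Q) : Pop 1 x = 0 := by
  apply lp.ext
  funext k
  show qop 1 ((x : ∀ _ : ℕ, K) k) = (0 : ∀ _ : ℕ, K) k
  rw [qop_one]
  rfl

lemma norm_Pop_diff (r r' : ℝ) (hr0 : 0 ≤ r) (hr1 : r ≤ 1) (hr0' : 0 ≤ r') (hr1' : r' ≤ 1)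
    (x : Q) : ‖Pop r x - Pop r' x‖ ≤ 2 * ‖wvec r - wvec r'‖ * ‖x‖ := by
  apply lp_norm_le_of_le (by positivity)
  intro k
  rw [lp.coeFn_sub, Pi.sub_apply, Pop_apply, Pop_apply]
  exact norm_qop_diff r r' hr0 hr1 hr0' hr1' _


/-! ## Continuity -/

open Filter Topology

lemma tendsto_inner_wvec (y : K) :
    Tendsto (fun r : ℝ => ‖⟪wvec r, y⟫‖) (nhdsWithin 1 (Set.Icc (0:ℝ) 1)) (nhds 0) := by
  rw [NormedAddCommGroup.tendsto_nhds_zero]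
  intro ε hε
  have hsum := lp.hasSum_single (E := fun _ : ℕ => ℂ) (p := 2) (by norm_num) y
  have h2 : ∀ᶠ s in Filter.atTop,
      ‖(∑ n ∈ s, lp.single 2 n ((y : ∀ _:ℕ, ℂ) n)) - y‖ < ε/2 := by
    have := Metric.tendsto_nhds.mp hsum (ε/2) (by linarith)
    simpa [dist_eq_norm] using this
  obtain ⟨G, hG⟩ := h2.exists
  set yG : K := ∑ n ∈ G, lp.single 2 n ((y : ∀ _:ℕ, ℂ) n) with hyG
  set C := ∑ n ∈ G, ‖(y : ∀ _:ℕ, ℂ) n‖ with hC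
  have hsq : Tendsto (fun r : ℝ => Real.sqrt (1 - r^2) * C)
      (nhdsWithin 1 (Set.Icc (0:ℝ) 1)) (nhds 0) := by
    have hcont : Continuous fun r : ℝ => Real.sqrt (1 - r^2) * C :=
      (Real.continuous_sqrt.comp (continuous_const.sub (continuous_pow 2))).mul continuous_const
    have h0 : Real.sqrt (1 - 1^2) * C = 0 := by norm_num
    have ht : Tendsto (fun r : ℝ => Real.sqrt (1 - r^2) * C)
        (nhdsWithin 1 (Set.Icc (0:ℝ) 1)) (nhds (Real.sqrt (1 - 1^2) * C)) :=
      (hcont.tendsto 1).mono_left nhdsWithin_le_nhds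
    rwa [h0] at ht
  have hev : ∀ᶠ r in (nhdsWithin 1 (Set.Icc (0:ℝ) 1)), Real.sqrt (1 - r^2) * C < ε/2 :=
    hsq.eventually_lt_const (by linarith)
  filter_upwards [hev, self_mem_nhdsWithin] with r h1 hmem
  obtain ⟨hr0, hr1⟩ := hmem
  have hbound : ‖⟪wvec r, y⟫‖ ≤ Real.sqrt (1 - r^2) * C + ‖yG - y‖ := by
    have hdec : ⟪wvec r, y⟫ = ⟪wvec r, yG⟫ + ⟪wvec r, y - yG⟫ := by
      rw [← inner_add_right]
      congr 1
      abel
    rw [hdec]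
    apply (norm_add_le _ _).trans
    apply add_le_add
    · rw [hyG, inner_sum]
      apply (norm_sum_le _ _).trans
      rw [hC, Finset.mul_sum]
      apply Finset.sum_le_sum
      intro n _
      exact norm_inner_wvec_single r hr0 hr1 n _
    · calc ‖⟪wvec r, y - yG⟫‖ ≤ ‖wvec r‖ * ‖y - yG‖ := norm_inner_le_norm _ _
        _ ≤ 1 * ‖y - yG‖ := mul_le_mul_of_nonneg_right (norm_wvec_le r hr0 hr1) (norm_nonneg _)
        _ = ‖yG - y‖ := by rw [one_mul, norm_sub_rev]
  rw [Real.norm_eq_abs, abs_of_nonneg (norm_nonneg _)]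
  calc ‖⟪wvec r, y⟫‖ ≤ Real.sqrt (1 - r^2) * C + ‖yG - y‖ := hbound
    _ < ε/2 + ε/2 := add_lt_add h1 hG
    _ = ε := by ring

lemma tendsto_Pop_one (x : Q) :
    Tendsto (fun r : ℝ => Pop r x) (nhdsWithin 1 (Set.Icc (0:ℝ) 1)) (nhds 0) := by
  rw [NormedAddCommGroup.tendsto_nhds_zero]
  intro ε hε
  have hsum := lp.hasSum_single (E := fun _ : ℕ => (lp (fun _ : ℕ => ℂ) 2 : Type)) (p := 2)
    (by norm_num) x
  have h2 : ∀ᶠ s in Filter.atTop,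
      ‖(∑ k ∈ s, lp.single 2 k ((x : ∀ _:ℕ, K) k)) - x‖ < ε/2 := by
    have := Metric.tendsto_nhds.mp hsum (ε/2) (by linarith)
    simpa [dist_eq_norm] using this
  obtain ⟨F, hF⟩ := h2.exists
  set xF : Q := ∑ k ∈ F, lp.single 2 k ((x : ∀ _:ℕ, K) k) with hxF
  have hsumF : Tendsto (fun r : ℝ => ∑ k ∈ F, ‖⟪wvec r, (x : ∀ _:ℕ, K) k⟫‖)
      (nhdsWithin 1 (Set.Icc (0:ℝ) 1)) (nhds 0) := by
    have := tendsto_finset_sum F (fun k _ => tendsto_inner_wvec ((x : ∀ _:ℕ, K) k))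
    simpa using this
  have hev : ∀ᶠ r in (nhdsWithin 1 (Set.Icc (0:ℝ) 1)),
      (∑ k ∈ F, ‖⟪wvec r, (x : ∀ _:ℕ, K) k⟫‖) < ε/2 := hsumF.eventually_lt_const (by linarith)
  filter_upwards [hev, self_mem_nhdsWithin] with r hsml hmem
  obtain ⟨hr0, hr1⟩ := hmem
  have key : ‖Pop r x‖ ≤ ‖xF - x‖ + ∑ k ∈ F, ‖⟪wvec r, (x : ∀ _:ℕ, K) k⟫‖ := by
    have hsplit : Pop r x = Pop r (x - xF) + Pop r xF := by
      rw [← map_add]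
      congr 1
      abel
    rw [hsplit]
    apply (norm_add_le _ _).trans
    apply add_le_add
    · calc ‖Pop r (x - xF)‖ ≤ ‖x - xF‖ := norm_Pop_le r hr0 hr1 _
        _ = ‖xF - x‖ := norm_sub_rev _ _
    · have hPF : Pop r xF = ∑ k ∈ F, lp.single 2 k (qop r ((x : ∀ _:ℕ, K) k)) := by
        rw [hxF, map_sum]
        exact Finset.sum_congr rfl fun k _ => Pop_single r k _
      rw [hPF]
      apply (norm_sum_le _ _).trans
      apply Finset.sum_le_sum
      intro k _
      rw [lp.norm_single (E := fun _ : ℕ => (lp (fun _ : ℕ => ℂ) 2 : Type)) (p := 2) (by norm_num) k (qop r ((x : ∀ _:ℕ, K) k))]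
      exact norm_qop_le_inner r hr0 hr1 _
  calc ‖Pop r x‖ ≤ ‖xF - x‖ + ∑ k ∈ F, ‖⟪wvec r, (x : ∀ _:ℕ, K) k⟫‖ := key
    _ < ε/2 + ε/2 := add_lt_add hF hsml
    _ = ε := by ring

lemma tendsto_wvec_sub (r0 : ℝ) (h0 : 0 ≤ r0) (h1 : r0 < 1) :
    Tendsto (fun r : ℝ => ‖wvec r - wvec r0‖) (nhdsWithin r0 (Set.Icc (0:ℝ) 1)) (nhds 0) := by
  set φ : ℝ → ℝ :=
    fun r => 2 - 2 * (Real.sqrt (1 - r^2) * Real.sqrt (1 - r0^2) / (1 - r*r0)) with hφ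
  have hd : (1:ℝ) - r0*r0 ≠ 0 := by nlinarith
  have hφcont : ContinuousAt φ r0 := by
    apply ContinuousAt.sub continuousAt_const
    apply ContinuousAt.mul continuousAt_const
    apply ContinuousAt.div
    · exact ((Real.continuous_sqrt.comp
        (continuous_const.sub (continuous_pow 2))).mul continuous_const).continuousAt
    · exact (continuous_const.sub (continuous_id.mul continuous_const)).continuousAt
    · simpa using hd
  have hφ0 : φ r0 = 0 := by
    have h2 : Real.sqrt (1 - r0^2) * Real.sqrt (1 - r0^2) = 1 - r0^2 :=
      Real.mul_self_sqrt (by nlinarith)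
    rw [hφ]
    simp only
    rw [h2, show (1:ℝ) - r0*r0 = 1 - r0^2 by ring,
      div_self (show (1:ℝ) - r0^2 ≠ 0 by nlinarith)]
    ring
  have hlt : ∀ᶠ r in nhdsWithin r0 (Set.Icc (0:ℝ) 1), r < 1 :=
    Filter.eventually_of_mem (nhdsWithin_le_nhds (Iio_mem_nhds h1)) (fun r hr => hr)
  have hsq : Tendsto (fun r : ℝ => ‖wvec r - wvec r0‖^(2:ℕ))
      (nhdsWithin r0 (Set.Icc (0:ℝ) 1)) (nhds 0) := by
    have hφt : Tendsto φ (nhdsWithin r0 (Set.Icc (0:ℝ) 1)) (nhds 0) := by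
      rw [← hφ0]
      exact hφcont.tendsto.mono_left nhdsWithin_le_nhds
    apply hφt.congr'
    filter_upwards [hlt, self_mem_nhdsWithin] with r hr1 hmem
    exact (norm_wvec_sub_sq r r0 hmem.1 hr1 h0 h1).symm
  have heq : (fun r : ℝ => ‖wvec r - wvec r0‖)
      = fun r => Real.sqrt (‖wvec r - wvec r0‖^(2:ℕ)) := by
    funext r
    rw [Real.sqrt_sq (norm_nonneg _)]
  rw [heq]
  have := (Real.continuous_sqrt.tendsto 0).comp hsq
  rw [Real.sqrt_zero] at this
  exact this

lemma tendsto_Pop_lt (x : Q) (r0 : ℝ) (h0 : 0 ≤ r0) (h1 : r0 < 1) :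
    Tendsto (fun r : ℝ => Pop r x) (nhdsWithin r0 (Set.Icc (0:ℝ) 1)) (nhds (Pop r0 x)) := by
  rw [tendsto_iff_norm_sub_tendsto_zero]
  apply squeeze_zero' (Filter.Eventually.of_forall fun r => norm_nonneg _)
  · filter_upwards [self_mem_nhdsWithin] with r hmem
    exact norm_Pop_diff r r0 hmem.1 hmem.2 h0 h1.le x
  · have := ((tendsto_wvec_sub r0 h0 h1).const_mul (2:ℝ)).mul_const ‖x‖
    simpa using this


/-! ## Decomposition of a separable infinite-dimensional Hilbert space -/

variable {H : Type*} [NormedAddCommGroup H] [InnerProductSpace ℂ H] [CompleteSpace H]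

lemma exists_nested_decomp [TopologicalSpace.SeparableSpace H]
    (hinf : ¬ FiniteDimensional ℂ H) :
    Nonempty (H ≃ₗᵢ[ℂ] (lp (fun _ : ℕ => (lp (fun _ : ℕ => ℂ) 2 : Type)) 2)) := by
  classical
  obtain ⟨w, b, hb⟩ := exists_hilbertBasis ℂ H
  have horth : Orthonormal ℂ ((↑) : w → H) := by rw [← hb]; exact b.orthonormal
  -- countability
  have hcnt : Countable ↥w := by
    apply Pairwise.countable_of_isOpen_disjoint
      (s := fun v : w => Metric.ball (v : H) (1/2))
      ?_ (fun _ => Metric.isOpen_ball) (fun i => ⟨i, Metric.mem_ball_self (by norm_num)⟩)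
    intro i j hij
    apply Metric.ball_disjoint_ball
    have h2 : ‖(i : H) - j‖ ^ 2 = 2 := by
      rw [@norm_sub_sq ℂ, horth.1 i, horth.1 j, horth.2 hij]
      norm_num
    rw [dist_eq_norm]
    nlinarith [norm_nonneg ((i : H) - j)]
  -- infiniteness
  have hinfw : Infinite ↥w := by
    rcases finite_or_infinite ↥w with hfin | hinf'
    · exfalso
      apply hinf
      have hwfin : w.Finite := Set.finite_coe_iff.mp hfin
      have hspan := b.dense_span
      rw [hb, Subtype.range_coe] at hspan
      have hfd : FiniteDimensional ℂ (Submodule.span ℂ w) :=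
        FiniteDimensional.span_of_finite ℂ hwfin
      have hclosed : IsClosed ((Submodule.span ℂ w : Submodule ℂ H) : Set H) :=
        Submodule.closed_of_finiteDimensional _
      rw [hclosed.submodule_topologicalClosure_eq] at hspan
      have : FiniteDimensional ℂ (⊤ : Submodule ℂ H) := hspan ▸ hfd
      exact (Submodule.topEquiv : (⊤ : Submodule ℂ H) ≃ₗ[ℂ] H).finiteDimensional
    · exact hinf'
  obtain ⟨hd⟩ := nonempty_denumerable ↥w
  let e : ↥w ≃ (ℕ × ℕ) := (Denumerable.eqv ↥w).trans (Denumerable.eqv (ℕ × ℕ)).symm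
  let v : ℕ × ℕ → H := fun i => ((e.symm i : ↥w) : H)
  have hv : Orthonormal ℂ v := horth.comp e.symm e.symm.injective
  have hrange : Set.range v = w := by
    have h1 : Set.range v = Set.range ((↑) : w → H) := e.symm.surjective.range_comp _
    rw [h1, Subtype.range_coe]
  have hsp : ⊤ ≤ (Submodule.span ℂ (Set.range v)).topologicalClosure := by
    rw [hrange]
    have hspan := b.dense_span
    rw [hb, Subtype.range_coe] at hspan
    exact hspan.ge
  -- row families
  have hrowinj : ∀ k : ℕ, Function.Injective (fun n : ℕ => ((k, n) : ℕ × ℕ)) := by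
    intro k n m h
    simpa using congrArg Prod.snd h
  have hvk : ∀ k : ℕ, Orthonormal ℂ (fun n => v (k, n)) := fun k =>
    hv.comp (fun n => (k, n)) (hrowinj k)
  let V : ∀ _ : ℕ, (lp (fun _ : ℕ => ℂ) 2 : Type) →ₗᵢ[ℂ] H := fun k =>
    ((hvk k).orthogonalFamily).linearIsometry
  have hVsingle : ∀ (k n : ℕ) (c : ℂ), V k (lp.single 2 n c) = c • v (k, n) := by
    intro k n c
    rw [show V k = ((hvk k).orthogonalFamily).linearIsometry from rfl,
      OrthogonalFamily.linearIsometry_apply_single]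
    rfl
  have hVhasSum : ∀ (k : ℕ) (f : K),
      HasSum (fun n => (f : ∀ _ : ℕ, ℂ) n • v (k, n)) (V k f) := by
    intro k f
    have := ((hvk k).orthogonalFamily).hasSum_linearIsometry f
    convert this using 1
    funext n
    rfl
  have hVorthog : ∀ (k l m : ℕ) (f : K), k ≠ l → ⟪v (l, m), V k f⟫ = 0 := by
    intro k l m f hkl
    have h3 := (hVhasSum k f).mapL (innerSL ℂ (v (l, m)))
    have hzero : (fun n => (innerSL ℂ (v (l, m))) ((f : ∀ _ : ℕ, ℂ) n • v (k, n)))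
        = fun _ => (0 : ℂ) := by
      funext n
      have hne : ((l, m) : ℕ × ℕ) ≠ (k, n) := by
        intro hcontra
        exact hkl (congrArg Prod.fst hcontra).symm
      simp only [innerSL_apply_apply, inner_smul_right, hv.2 hne, mul_zero]
    rw [hzero] at h3
    exact (h3.unique hasSum_zero)
  have houter : OrthogonalFamily ℂ (fun _ : ℕ => (lp (fun _ : ℕ => ℂ) 2 : Type)) V := by
    intro k l hkl f g
    have hg := (hVhasSum l g).mapL (innerSL ℂ (V k f))
    have hzero : (fun m => (innerSL ℂ (V k f)) ((g : ∀ _ : ℕ, ℂ) m • v (l, m)))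
        = fun _ => (0 : ℂ) := by
      funext m
      have h0 : ⟪V k f, v (l, m)⟫ = 0 := inner_eq_zero_symm.mpr (hVorthog k l m f hkl)
      simp only [innerSL_apply_apply, inner_smul_right, h0, mul_zero]
    rw [hzero] at hg
    exact hg.unique hasSum_zero
  have htotal : ⊤ ≤ (⨆ k, LinearMap.range (V k).toLinearMap).topologicalClosure := by
    refine hsp.trans (Submodule.topologicalClosure_mono ?_)
    rw [Submodule.span_le]
    rintro _ ⟨⟨k, n⟩, rfl⟩
    apply Submodule.mem_iSup_of_mem k
    refine ⟨lp.single 2 n (1 : ℂ), ?_⟩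
    rw [LinearIsometry.coe_toLinearMap, hVsingle k n 1, one_smul]
  have hSum : IsHilbertSum ℂ (fun _ : ℕ => (lp (fun _ : ℕ => ℂ) 2 : Type)) V :=
    IsHilbertSum.mk houter htotal
  exact ⟨hSum.linearIsometryEquiv⟩

end ProjField

open ContinuousLinearMap Module

/-- A projection on a Hilbert space: a self-adjoint idempotent bounded operator. -/
def IsProjection {H : Type*} [NormedAddCommGroup H] [InnerProductSpace ℂ H]
    [CompleteSpace H] (p : H →L[ℂ] H) : Prop :=
  IsSelfAdjoint p ∧ p * p = p

section Main

local notation "⟪" x ", " y "⟫" => @inner ℂ _ _ x y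

/-- There is a strongly continuous projection-valued map on `[0,1]` vanishing exactly at
a prescribed point `a` and of infinite rank elsewhere. -/
theorem exists_infinite_rank_field_vanishing_at_point {H : Type*} [NormedAddCommGroup H]
    [InnerProductSpace ℂ H] [CompleteSpace H] [TopologicalSpace.SeparableSpace H]
    (hinf : ¬ FiniteDimensional ℂ H)
    (a : ℝ) (ha : a ∈ Set.Icc (0:ℝ) 1) :
    ∃ p : Set.Icc (0:ℝ) 1 → H →L[ℂ] H,
      (∀ v : H, Continuous fun t => p t v) ∧
      (∀ t, IsProjection (p t)) ∧
      p ⟨a, ha⟩ = 0 ∧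
      (∀ t : Set.Icc (0:ℝ) 1, (t : ℝ) ≠ a →
        ¬ FiniteDimensional ℂ (LinearMap.range (p t : H →ₗ[ℂ] H))) := by
  classical
  obtain ⟨U⟩ := ProjField.exists_nested_decomp hinf
  let A : H →L[ℂ] lp (fun _ : ℕ => (lp (fun _ : ℕ => ℂ) 2 : Type)) 2 :=
    (U.toContinuousLinearEquiv : H →L[ℂ] _)
  let B : lp (fun _ : ℕ => (lp (fun _ : ℕ => ℂ) 2 : Type)) 2 →L[ℂ] H :=
    (U.symm.toContinuousLinearEquiv : _ →L[ℂ] H)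
  let d : Set.Icc (0:ℝ) 1 → ℝ := fun t => 1 - |t.1 - a|
  have habs : ∀ t : Set.Icc (0:ℝ) 1, |t.1 - a| ≤ 1 := by
    intro t
    have h1 := t.2.1
    have h2 := t.2.2
    have h3 := ha.1
    have h4 := ha.2
    rw [abs_le]
    constructor <;> linarith
  have hd0 : ∀ t, 0 ≤ d t := fun t => by
    have := habs t
    simp only [d]
    linarith
  have hd1 : ∀ t, d t ≤ 1 := fun t => by
    have := abs_nonneg (t.1 - a)
    simp only [d]
    linarith
  have hAB : ∀ u, A (B u) = u := fun u => U.apply_symm_apply u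
  let p : Set.Icc (0:ℝ) 1 → H →L[ℂ] H := fun t => B.comp ((ProjField.Pop (d t)).comp A)
  refine ⟨p, ?_, ?_, ?_, ?_⟩
  · -- strong continuity
    intro v
    have hxc : Continuous fun t : Set.Icc (0:ℝ) 1 => ProjField.Pop (d t) (A v) := by
      rw [continuous_iff_continuousAt]
      intro t0
      have hdc : Continuous d :=
        continuous_const.sub ((continuous_subtype_val.sub continuous_const).abs)
      have htd : Filter.Tendsto d (nhds t0) (nhdsWithin (d t0) (Set.Icc (0:ℝ) 1)) :=
        tendsto_nhdsWithin_iff.mpr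
          ⟨hdc.continuousAt, Filter.Eventually.of_forall (fun t => ⟨hd0 t, hd1 t⟩)⟩
      by_cases hta : (t0 : ℝ) = a
      · have hdt0 : d t0 = 1 := by simp [d, hta]
        have h1 := (ProjField.tendsto_Pop_one (A v)).comp (hdt0 ▸ htd)
        show Filter.Tendsto (fun t => ProjField.Pop (d t) (A v)) (nhds t0)
          (nhds (ProjField.Pop (d t0) (A v)))
        rw [hdt0, ProjField.Pop_one]
        exact h1
      · have hlt : d t0 < 1 := by
          have : 0 < |t0.1 - a| := abs_pos.mpr (sub_ne_zero.mpr hta)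
          simp only [d]
          linarith
        exact (ProjField.tendsto_Pop_lt (A v) (d t0) (hd0 t0) hlt).comp htd
    exact B.continuous.comp hxc
  · -- projections
    intro t
    constructor
    · rw [ContinuousLinearMap.isSelfAdjoint_iff_isSymmetric]
      intro x y
      have e1 : ∀ (u : lp (fun _ : ℕ => (lp (fun _ : ℕ => ℂ) 2 : Type)) 2) (z : H),
          ⟪U.symm u, z⟫ = ⟪u, U z⟫ := by
        intro u z
        calc ⟪U.symm u, z⟫ = ⟪U (U.symm u), U z⟫ := (U.inner_map_map _ _).symm
          _ = ⟪u, U z⟫ := by rw [U.apply_symm_apply]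
      show ⟪B (ProjField.Pop (d t) (A x)), y⟫ = ⟪x, B (ProjField.Pop (d t) (A y))⟫
      calc ⟪B (ProjField.Pop (d t) (A x)), y⟫
          = ⟪ProjField.Pop (d t) (A x), U y⟫ := e1 _ _
        _ = ⟪A x, ProjField.Pop (d t) (U y)⟫ := ProjField.Pop_symm _ _ _
        _ = ⟪x, U.symm (ProjField.Pop (d t) (U y))⟫ := by
            have := e1 (ProjField.Pop (d t) (U y)) x
            calc ⟪A x, ProjField.Pop (d t) (U y)⟫
                = ⟪U x, ProjField.Pop (d t) (U y)⟫ := rfl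
              _ = ⟪x, U.symm (ProjField.Pop (d t) (U y))⟫ := by
                  rw [← inner_conj_symm, ← this, inner_conj_symm]
        _ = ⟪x, B (ProjField.Pop (d t) (A y))⟫ := rfl
    · ext v
      rw [ContinuousLinearMap.mul_apply]
      show B (ProjField.Pop (d t) (A (B (ProjField.Pop (d t) (A v)))))
          = B (ProjField.Pop (d t) (A v))
      rw [hAB, ProjField.Pop_Pop (d t) (hd0 t) (hd1 t)]
  · -- vanishing at a
    ext v
    show B (ProjField.Pop (d ⟨a, ha⟩) (A v)) = 0
    have hda : d ⟨a, ha⟩ = 1 := by simp [d]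
    rw [hda, ProjField.Pop_one, map_zero]
  · -- infinite rank
    intro t hta hfd
    have hlt : d t < 1 := by
      have : 0 < |t.1 - a| := abs_pos.mpr (sub_ne_zero.mpr hta)
      simp only [d]
      linarith
    have h0 : 0 ≤ d t := hd0 t
    let sing : ℕ → lp (fun _ : ℕ => (lp (fun _ : ℕ => ℂ) 2 : Type)) 2 :=
      fun k => lp.single 2 k (ProjField.wvec (d t))
    have hsingON : Orthonormal ℂ sing := by
      constructor
      · intro k
        have hns := lp.norm_single (p := 2)
          (E := fun _ : ℕ => (lp (fun _ : ℕ => ℂ) 2 : Type)) (by norm_num)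
          k (ProjField.wvec (d t))
        calc ‖sing k‖ = ‖ProjField.wvec (d t)‖ := hns
          _ = 1 := ProjField.norm_wvec (d t) h0 hlt
      · intro k l hkl
        have h1 : ⟪sing k, sing l⟫
            = ⟪ProjField.wvec (d t),
                (sing l : ∀ _ : ℕ, (lp (fun _ : ℕ => ℂ) 2 : Type)) k⟫ :=
          lp.inner_single_left k (ProjField.wvec (d t)) (sing l)
        have h2 : (sing l : ∀ _ : ℕ, (lp (fun _ : ℕ => ℂ) 2 : Type)) k = 0 :=
          lp.single_apply_ne 2 l _ hkl
        rw [h1, h2, inner_zero_right]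
    let g : ℕ → H := fun k => U.symm (sing k)
    have hgON : Orthonormal ℂ g := hsingON.comp_linearIsometryEquiv U.symm
    have hgmem : ∀ k, g k ∈ LinearMap.range (p t : H →ₗ[ℂ] H) := by
      intro k
      refine ⟨g k, ?_⟩
      show B (ProjField.Pop (d t) (A (U.symm (sing k)))) = g k
      have hAU : A (U.symm (sing k)) = sing k := U.apply_symm_apply _
      have hfix : ProjField.Pop (d t) (sing k) = sing k := by
        rw [show sing k = lp.single 2 k (ProjField.wvec (d t)) from rfl,
          ProjField.Pop_single, ProjField.qop_wvec (d t) h0 hlt]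
      rw [hAU, hfix]
      rfl
    let ν : ℕ → ↥(LinearMap.range (p t : H →ₗ[ℂ] H)) := fun k => ⟨g k, hgmem k⟩
    have hν : LinearIndependent ℂ ν := by
      apply LinearIndependent.of_comp (LinearMap.range (p t : H →ₗ[ℂ] H)).subtype
      have hcomp : (⇑(LinearMap.range (p t : H →ₗ[ℂ] H)).subtype ∘ ν) = g := rfl
      rw [hcomp]
      exact hgON.linearIndependent
    exact Module.Finite.not_linearIndependent_of_infinite ν hν

end Main
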